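/- Let K : ℝ × ℝ → ℝ be continuously differentiable with ∂₁K(x,y) = −∂₁K(y,x) for all x, y. Fix x ∈ ℝ and assume that the functions y ↦ K(x,y)·K(y,x) and y ↦ ∂₁K(x,y)·∫_x^y K(x,t) dt are Lebesgue integrable on ℝ and that the limits L₊ = lim_{y→+∞} K(y,x)·∫_x^y K(x,t) dt and L₋ = lim_{y→−∞} K(y,x)·∫_x^y K(x,t) dt exist. Then ∫_ℝ det𝕂₄(x,y) dy − (1/2)·K(x,x) = (1/4)·(2·Def_K(x) − (L₊ − L₋)). -/

import Mathlib

open MeasureTheory Filter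

theorem stmt_12 (K : ℝ → ℝ → ℝ)
    (hK : ContDiff ℝ 1 fun p : ℝ × ℝ => K p.1 p.2)
    (hskew : ∀ x y : ℝ, deriv (fun t => K t y) x = - deriv (fun t => K t x) y)
    (x : ℝ)
    (hint1 : Integrable fun y => K x y * K y x)
    (hint2 : Integrable fun y => deriv (fun t => K t y) x * ∫ t in x..y, K x t)
    (Lp Lm : ℝ)
    (hLp : Tendsto (fun y => K y x * ∫ t in x..y, K x t) atTop (nhds Lp))
    (hLm : Tendsto (fun y => K y x * ∫ t in x..y, K x t) atBot (nhds Lm)) :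
    (∫ y : ℝ, (1/4) * (K x y * K y x + deriv (fun t => K t y) x * ∫ t in x..y, K x t))
        - (1/2) * K x x
      = (1/4) * (2 * ((∫ y : ℝ, K x y * K y x) - K x x) - (Lp - Lm)) := by
  have hKcont : Continuous fun p : ℝ × ℝ => K p.1 p.2 := hK.continuous
  have hKx : Continuous fun t => K x t := hKcont.comp (continuous_const.prodMk continuous_id)
  have hgdiff : Differentiable ℝ fun t => K t x :=
    (hK.differentiable one_ne_zero).comp (differentiable_id.prodMk (differentiable_const x))
  set F : ℝ → ℝ := fun y => ∫ t in x..y, K x t with hF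
  have hFderiv : ∀ y : ℝ, HasDerivAt F (K x y) y := by
    intro y
    exact intervalIntegral.integral_hasDerivAt_right (hKx.intervalIntegrable x y)
      (hKx.stronglyMeasurableAtFilter _ _) hKx.continuousAt
  set G' : ℝ → ℝ := fun y => deriv (fun t => K t x) y * F y + K y x * K x y with hG'
  have hGderiv : ∀ y : ℝ, HasDerivAt (fun y => K y x * F y) (G' y) y := by
    intro y
    exact ((hgdiff y).hasDerivAt).mul (hFderiv y)
  have hG'eq : G' = fun y => K x y * K y x - deriv (fun t => K t y) x * F y := by
    funext y
    have h := hskew y x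
    simp only [hG']
    rw [h]
    ring
  have hG'int : Integrable G' := by
    rw [hG'eq]; exact hint1.sub hint2
  have hFTC : ∫ y, G' y = Lp - Lm :=
    integral_of_hasDerivAt_of_tendsto hGderiv hG'int hLm hLp
  have hsub : (∫ y, K x y * K y x) - (∫ y, deriv (fun t => K t y) x * F y) = Lp - Lm := by
    rw [← integral_sub hint1 hint2, ← hFTC, hG'eq]
  have hsplit : (∫ y : ℝ, (1/4) * (K x y * K y x + deriv (fun t => K t y) x * F y))
      = (1/4) * ((∫ y, K x y * K y x) + ∫ y, deriv (fun t => K t y) x * F y) := by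
    rw [MeasureTheory.integral_const_mul, integral_add hint1 hint2]
  rw [hsplit]
  linarith
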